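/- Let Ω be a second countable Hausdorff space, T a positive strong Feller kernel operator on B_b(Ω), and μ ≠ 0 a positive finite T-invariant Borel measure. Then there exists a μ-null set N ⊂ Ω such that for every sequence (A_n) of Borel sets with μ(A_n) → 0 and every x ∈ Ω \ N, (T²𝟙_{A_n})(x) → 0. -/

import Mathlib

open MeasureTheory Filter Topology Set

/-- `Bb f`: `f` is a bounded Borel measurable real-valued function. -/
def Bb {Ω : Type*} [MeasurableSpace Ω] (f : Ω → ℝ) : Prop :=
  Measurable f ∧ ∃ C : ℝ, ∀ x, |f x| ≤ C

theorem stmt_4 {Ω : Type*} [TopologicalSpace Ω] [T2Space Ω] [SecondCountableTopology Ω]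
    [MeasurableSpace Ω] [BorelSpace Ω]
    (μ : Measure Ω) [IsFiniteMeasure μ] (hμ : μ ≠ 0)
    (T : (Ω → ℝ) → (Ω → ℝ))
    (hTBb : ∀ f, Bb f → Bb (T f))
    (hadd : ∀ f g, Bb f → Bb g → T (f + g) = T f + T g)
    (hsmul : ∀ (c : ℝ) (f), Bb f → T (c • f) = c • T f)
    (hpos : ∀ f, Bb f → (∀ x, 0 ≤ f x) → ∀ x, 0 ≤ T f x)
    (hSF : ∀ f, Bb f → Continuous (T f))
    (hker : ∃ k : Ω → Ω → ℝ, Measurable (Function.uncurry k) ∧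
      ∀ f, Bb f → (∀ x, Integrable (fun y => k x y * f y) μ) ∧
        ∀ᵐ x ∂μ, T f x = ∫ y, k x y * f y ∂μ)
    (hinv : ∀ f, Bb f → ∫ x, T f x ∂μ = ∫ x, f x ∂μ) :
    ∃ N : Set Ω, μ N = 0 ∧ ∀ (A : ℕ → Set Ω), (∀ n, MeasurableSet (A n)) →
      Tendsto (fun n => μ (A n)) atTop (nhds 0) →
      ∀ x ∉ N, Tendsto (fun n => T (T ((A n).indicator fun _ => (1 : ℝ))) x) atTop (nhds 0) := by
  classical
  obtain ⟨k, hkm, hk⟩ := hker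
  set ind : Set Ω → Ω → ℝ := fun A => A.indicator (fun _ => (1 : ℝ)) with hind
  have hindnn : ∀ (A : Set Ω) (x : Ω), 0 ≤ ind A x := fun A x =>
    Set.indicator_nonneg (fun _ _ => zero_le_one) x
  have hBbInd : ∀ A : Set Ω, MeasurableSet A → Bb (ind A) := by
    intro A hA
    refine ⟨measurable_const.indicator hA, 1, fun x => ?_⟩
    by_cases hx : x ∈ A <;> simp [hind, hx]
  have hBb1 : Bb (fun _ : Ω => (1 : ℝ)) := ⟨measurable_const, 1, fun x => by norm_num⟩
  obtain ⟨hmeas1, C, hC⟩ := hTBb _ hBb1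
  -- uniform bound on T (ind A)
  have hTnn : ∀ A : Set Ω, MeasurableSet A → ∀ y, 0 ≤ T (ind A) y := fun A hA =>
    hpos _ (hBbInd A hA) (hindnn A)
  have hTle : ∀ A : Set Ω, MeasurableSet A → ∀ y, |T (ind A) y| ≤ C := by
    intro A hA y
    have hcompl := hBbInd _ hA.compl
    have hsum : ind A + ind Aᶜ = fun _ => (1 : ℝ) := by
      funext z; by_cases hz : z ∈ A <;> simp [hind, hz]
    have htadd := hadd (ind A) (ind Aᶜ) (hBbInd A hA) hcompl
    rw [hsum] at htadd
    have h2 := congrFun htadd y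
    have h3 : 0 ≤ T (ind Aᶜ) y := hpos _ hcompl (hindnn _) y
    have h4 : 0 ≤ T (ind A) y := hTnn A hA y
    have h5 := hC y
    rw [abs_le] at h5 ⊢
    simp only [Pi.add_apply] at h2
    constructor <;> linarith [h5.1, h5.2]
  -- integrability of k x
  have hkint : ∀ x, Integrable (fun y => k x y) μ := by
    intro x
    have := (hk _ hBb1).1 x
    simpa using this
  have hkmx : ∀ x, Measurable (fun y => k x y) := fun x =>
    hkm.comp measurable_prodMk_left
  -- core convergence lemma
  have core : ∀ (x : Ω) (B : ℕ → Set Ω), (∀ m, MeasurableSet (B m)) →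
      Tendsto (fun m => μ (B m)) atTop (𝓝 0) →
      Tendsto (fun m => ∫ y, k x y * T (ind (B m)) y ∂μ) atTop (𝓝 0) := by
    intro x B hBm hB0
    have haek : ∀ᵐ y ∂μ, ∀ m, T (ind (B m)) y = ∫ z, k y z * ind (B m) z ∂μ :=
      ae_all_iff.2 fun m => (hk _ (hBbInd _ (hBm m))).2
    have hDC := tendsto_integral_of_dominated_convergence
      (F := fun m y => k x y * T (ind (B m)) y) (f := fun _ => (0 : ℝ))
      (bound := fun y => |k x y| * C)
      (fun m => ((hkmx x).mul (hTBb _ (hBbInd _ (hBm m))).1).aestronglyMeasurable)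
      (((hkint x).abs).mul_const C)
      (fun m => Filter.Eventually.of_forall fun y => by
        have habs : ‖k x y * T (ind (B m)) y‖ = |k x y| * |T (ind (B m)) y| := by
          rw [Real.norm_eq_abs, abs_mul]
        rw [habs]
        exact mul_le_mul_of_nonneg_left (hTle _ (hBm m) y) (abs_nonneg _))
      ?_
    · simpa using hDC
    · filter_upwards [haek] with y hy
      have h1 : ∀ m, T (ind (B m)) y = ∫ z in B m, k y z ∂μ := by
        intro m
        rw [hy m, ← integral_indicator (hBm m)]
        congr 1
        funext z
        by_cases hz : z ∈ B m <;> simp [hind, hz]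
      have h2 : Tendsto (fun m => ∫ z in B m, k y z ∂μ) atTop (𝓝 0) :=
        (hkint y).tendsto_setIntegral_nhds_zero hB0
      have h3 : Tendsto (fun m => k x y * T (ind (B m)) y) atTop (𝓝 (k x y * 0)) := by
        simp only [h1]
        exact h2.const_mul _
      simpa using h3
  -- the open sets for the Lindelöf argument
  set V : ℕ → ℕ → Set Ω → Set Ω := fun j m A =>
    if MeasurableSet A ∧ μ A ≤ (2 : ENNReal)⁻¹ ^ m then
      {x | 1 / ((j : ℝ) + 1) < T (T (ind A)) x} else ∅ with hV
  have hVopen : ∀ j m A, IsOpen (V j m A) := by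
    intro j m A
    rw [hV]
    dsimp only
    split_ifs with hc
    · exact isOpen_lt continuous_const (hSF _ (hTBb _ (hBbInd A hc.1)))
    · exact isOpen_empty
  choose s hsc hsU using fun j m =>
    TopologicalSpace.isOpen_iUnion_countable (V j m) (hVopen j m)
  -- the universal null set
  refine ⟨⋃ (j : ℕ), ⋃ (m : ℕ), ⋃ A ∈ s j m,
      {x | ¬ (MeasurableSet A → T (T (ind A)) x = ∫ y, k x y * T (ind A) y ∂μ)}, ?_, ?_⟩
  · refine measure_iUnion_null fun j => measure_iUnion_null fun m =>
      (measure_biUnion_null_iff (hsc j m)).2 fun A _ => ?_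
    by_cases hA : MeasurableSet A
    · have hae := (hk _ (hTBb _ (hBbInd A hA))).2
      have h2 : ∀ᵐ x ∂μ,
          (MeasurableSet A → T (T (ind A)) x = ∫ y, k x y * T (ind A) y ∂μ) :=
        hae.mono fun x hx _ => hx
      exact ae_iff.mp h2
    · have : {x | ¬ (MeasurableSet A → T (T (ind A)) x = ∫ y, k x y * T (ind A) y ∂μ)} = ∅ := by
        ext x
        simp only [Set.mem_setOf_eq, Set.mem_empty_iff_false, iff_false, not_not]
        intro hA'
        exact absurd hA' hA
      rw [this]
      exact measure_empty
  · intro A hA hA0 x hx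
    -- key claim
    have claim : ∀ j : ℕ, ∃ m : ℕ, ∀ B : Set Ω, MeasurableSet B →
        μ B ≤ (2 : ENNReal)⁻¹ ^ m → T (T (ind B)) x ≤ 1 / ((j : ℝ) + 1) := by
      intro j
      by_contra hcon
      push_neg at hcon
      choose B hB1 hB2 hB3 using hcon
      have hxU : ∀ m, x ∈ ⋃ A' ∈ s j m, V j m A' := by
        intro m
        rw [hsU j m]
        refine Set.mem_iUnion.2 ⟨B m, ?_⟩
        rw [hV]
        dsimp only
        rw [if_pos ⟨hB1 m, hB2 m⟩]
        exact hB3 m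
      choose B' hB'mem hxB' using fun m => Set.mem_iUnion₂.1 (hxU m)
      have hcond : ∀ m, (MeasurableSet (B' m) ∧ μ (B' m) ≤ (2 : ENNReal)⁻¹ ^ m) ∧
          1 / ((j : ℝ) + 1) < T (T (ind (B' m))) x := by
        intro m
        have hx' := hxB' m
        rw [hV] at hx'
        dsimp only at hx'
        by_cases hc : MeasurableSet (B' m) ∧ μ (B' m) ≤ (2 : ENNReal)⁻¹ ^ m
        · rw [if_pos hc] at hx'
          exact ⟨hc, hx'⟩
        · rw [if_neg hc] at hx'
          exact absurd hx' (Set.notMem_empty x)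
      -- x is not in the bad set of B' m
      have hker' : ∀ m, T (T (ind (B' m))) x = ∫ y, k x y * T (ind (B' m)) y ∂μ := by
        intro m
        have hxm : x ∉ {x | ¬ (MeasurableSet (B' m) →
            T (T (ind (B' m))) x = ∫ y, k x y * T (ind (B' m)) y ∂μ)} := by
          intro hmem
          exact hx (Set.mem_iUnion.2 ⟨j, Set.mem_iUnion.2 ⟨m,
            Set.mem_iUnion₂.2 ⟨B' m, hB'mem m, hmem⟩⟩⟩)
        simp only [Set.mem_setOf_eq, not_not] at hxm
        exact hxm ((hcond m).1.1)
      -- μ (B' m) → 0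
      have hμB' : Tendsto (fun m => μ (B' m)) atTop (𝓝 0) := by
        have hpow : Tendsto (fun m : ℕ => (2 : ENNReal)⁻¹ ^ m) atTop (𝓝 0) :=
          ENNReal.tendsto_pow_atTop_nhds_zero_of_lt_one
            (by simp [ENNReal.inv_lt_one, ENNReal.one_lt_two])
        exact tendsto_of_tendsto_of_tendsto_of_le_of_le tendsto_const_nhds hpow
          (fun m => zero_le) (fun m => (hcond m).1.2)
      have hlim := core x B' (fun m => (hcond m).1.1) hμB'
      have hle : 1 / ((j : ℝ) + 1) ≤ 0 := by
        refine ge_of_tendsto hlim (Filter.Eventually.of_forall fun m => ?_)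
        rw [← hker' m]
        exact le_of_lt (hcond m).2
      have : (0 : ℝ) < 1 / ((j : ℝ) + 1) := by positivity
      linarith
    -- finish
    rw [Metric.tendsto_atTop]
    intro ε hε
    obtain ⟨j, hj⟩ := exists_nat_one_div_lt hε
    obtain ⟨m, hm⟩ := claim j
    have hev : ∀ᶠ n in atTop, μ (A n) < (2 : ENNReal)⁻¹ ^ m := by
      refine hA0.eventually_lt_const ?_
      exact ENNReal.pow_pos (ENNReal.inv_pos.2 ENNReal.ofNat_ne_top) m
    obtain ⟨n₀, hn₀⟩ := Filter.eventually_atTop.1 hev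
    refine ⟨n₀, fun n hn => ?_⟩
    have h1 : T (T (ind (A n))) x ≤ 1 / ((j : ℝ) + 1) :=
      hm _ (hA n) (le_of_lt (hn₀ n hn))
    have h0 : 0 ≤ T (T (ind (A n))) x :=
      hpos _ (hTBb _ (hBbInd _ (hA n))) (hTnn _ (hA n)) x
    rw [Real.dist_eq, sub_zero, abs_of_nonneg h0]
    calc T (T (ind (A n))) x ≤ 1 / ((j : ℝ) + 1) := h1
      _ < ε := by exact_mod_cast hj
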